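/- Let K be a field, V a finite-dimensional K-vector space, B a nondegenerate symmetric bilinear form on V, and f an endomorphism of V that is an isometry of B. Suppose V is the internal direct sum of the eigenspaces of f. Then every eigenvalue λ of f is nonzero, and the map sending v ∈ ker(f − λ·id) to the functional w ↦ B(v,w) on ker(f − λ⁻¹·id) is a linear isomorphism onto the dual space of ker(f − λ⁻¹·id); in particular dim ker(f − λ·id) = dim ker(f − λ⁻¹·id). -/

import Mathlib

set_option maxHeartbeats 1000000


/-- Let `f` be an isometry of a nondegenerate symmetric bilinear form `B` on a
finite-dimensional space `V`, and suppose `V` is the internal direct sum of the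
eigenspaces of `f`.  Then every eigenvalue `l` of `f` is nonzero, and the map sending
`v ∈ ker(f − l·id)` to the functional `w ↦ B(v,w)` on `ker(f − l⁻¹·id)` is a linear
isomorphism onto the dual of `ker(f − l⁻¹·id)`; in particular the two kernels have the
same dimension. -/
theorem stmt6 (K V : Type*) [Field K] [DecidableEq K] [AddCommGroup V] [Module K V]
    [FiniteDimensional K V]
    (B : V →ₗ[K] V →ₗ[K] K)
    (hsymm : ∀ v w, B v w = B w v)
    (hnondeg : ∀ v, (∀ w, B v w = 0) → v = 0)
    (f : V →ₗ[K] V)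
    (hiso : ∀ v w, B (f v) (f w) = B v w)
    (hint : DirectSum.IsInternal fun c : K => LinearMap.ker (f - c • (LinearMap.id : V →ₗ[K] V)))
    (l : K) (hl : LinearMap.ker (f - l • (LinearMap.id : V →ₗ[K] V)) ≠ ⊥) :
    l ≠ 0 ∧
    ∃ e : LinearMap.ker (f - l • (LinearMap.id : V →ₗ[K] V)) ≃ₗ[K]
        Module.Dual K (LinearMap.ker (f - l⁻¹ • (LinearMap.id : V →ₗ[K] V))),
      (∀ (v : LinearMap.ker (f - l • (LinearMap.id : V →ₗ[K] V)))
          (w : LinearMap.ker (f - l⁻¹ • (LinearMap.id : V →ₗ[K] V))),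
        e v w = B v w) ∧
      Module.finrank K (LinearMap.ker (f - l • (LinearMap.id : V →ₗ[K] V))) =
        Module.finrank K (LinearMap.ker (f - l⁻¹ • (LinearMap.id : V →ₗ[K] V))) := by
  set E : K → Submodule K V := fun c => LinearMap.ker (f - c • (LinearMap.id : V →ₗ[K] V))
    with hE
  -- membership in the eigenspace means eigenvector
  have hmem : ∀ (c : K) (v : V), v ∈ E c → f v = c • v := by
    intro c v hv
    have h : f v - c • v = 0 := hv
    rw [sub_eq_zero] at h
    exact h
  -- eigenvalues are nonzero
  have hne : l ≠ 0 := by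
    intro h0
    subst h0
    obtain ⟨v, hv, hv0⟩ := Submodule.ne_bot_iff _ |>.1 hl
    apply hv0
    apply hnondeg
    intro w
    have := hiso v w
    rw [hmem 0 v hv, zero_smul] at this
    simpa using this.symm
  refine ⟨hne, ?_⟩
  -- orthogonality between eigenspaces with a*b ≠ 1
  have horth : ∀ (a b : K) (v w : V), v ∈ E a → w ∈ E b → a * b ≠ 1 → B v w = 0 := by
    intro a b v w hv hw hab
    have h := hiso v w
    rw [hmem a v hv, hmem b w hw] at h
    simp only [map_smul, LinearMap.smul_apply, smul_eq_mul] at h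
    have : (a * b - 1) * B v w = 0 := by ring_nf; linear_combination h
    rcases mul_eq_zero.1 this with h1 | h1
    · exact absurd (by linear_combination h1) hab
    · exact h1
  -- if v ∈ E a pairs to zero with all of E a⁻¹, then v = 0
  have hker : ∀ (a : K), a ≠ 0 → ∀ v : V, v ∈ E a →
      (∀ w ∈ E a⁻¹, B v w = 0) → v = 0 := by
    intro a ha v hv h0
    apply hnondeg
    intro w
    have htop : w ∈ ⨆ c : K, E c := by
      rw [hint.submodule_iSup_eq_top]; trivial
    refine Submodule.iSup_induction (p := E) (motive := fun w => B v w = 0) htop ?_ (by simp) ?_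
    · intro b w hw
      by_cases hb : b = a⁻¹
      · exact h0 w (hb ▸ hw)
      · refine horth a b v w hv hw ?_
        intro hab
        exact hb (eq_inv_of_mul_eq_one_right (by linear_combination hab))
    · intro x y hx hy
      simp only [map_add, hx, hy, add_zero]
  have hinv_ne : l⁻¹ ≠ 0 := inv_ne_zero hne
  have hinv_inv : (l⁻¹)⁻¹ = l := inv_inv l
  -- pairings
  let P : E l →ₗ[K] Module.Dual K (E l⁻¹) :=
    B.compl₁₂ (E l).subtype (E l⁻¹).subtype
  let Q : E l⁻¹ →ₗ[K] Module.Dual K (E l) :=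
    B.flip.compl₁₂ (E l⁻¹).subtype (E l).subtype
  have hP : Function.Injective P := by
    rw [← LinearMap.ker_eq_bot, LinearMap.ker_eq_bot']
    intro v hv
    ext
    refine hker l hne v.1 v.2 ?_
    intro w hw
    have := congrArg (fun g => g ⟨w, hw⟩) hv
    simpa [P] using this
  have hQ : Function.Injective Q := by
    rw [← LinearMap.ker_eq_bot, LinearMap.ker_eq_bot']
    intro w hw
    ext
    refine hker l⁻¹ hinv_ne w.1 w.2 ?_
    intro v hv
    rw [hinv_inv] at hv
    have := congrArg (fun g => g ⟨v, hv⟩) hw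
    simpa [Q, hsymm] using this
  have hr1 : Module.finrank K (E l) ≤ Module.finrank K (E l⁻¹) := by
    calc Module.finrank K (E l) ≤ Module.finrank K (Module.Dual K (E l⁻¹)) :=
          LinearMap.finrank_le_finrank_of_injective hP
      _ = Module.finrank K (E l⁻¹) := Subspace.dual_finrank_eq
  have hr2 : Module.finrank K (E l⁻¹) ≤ Module.finrank K (E l) := by
    calc Module.finrank K (E l⁻¹) ≤ Module.finrank K (Module.Dual K (E l)) :=
          LinearMap.finrank_le_finrank_of_injective hQ
      _ = Module.finrank K (E l) := Subspace.dual_finrank_eq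
  have hr : Module.finrank K (E l) = Module.finrank K (E l⁻¹) := le_antisymm hr1 hr2
  have hdim : Module.finrank K (E l) = Module.finrank K (Module.Dual K (E l⁻¹)) := by
    rw [Subspace.dual_finrank_eq]; exact hr
  refine ⟨P.linearEquivOfInjective hP hdim, ?_, hr⟩
  intro v w
  rw [LinearMap.linearEquivOfInjective_apply]
  simp [P, LinearMap.compl₁₂_apply]
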